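/- Let G = (V,E) be a graph obtained by convex expansion of a median graph G' with respect to convex sets W_1, W_2 ⊆ V(G') with W_1 ∪ W_2 = V(G'), W_1 ∩ W_2 ≠ ∅, and no edges between W_1 \ W_2 and W_2 \ W_1. Suppose G' carries an intermediate profile R' on alternative set X. Define a profile R on G over X ∪ {y} (y ∉ X a clone of a fixed x ∈ X) by: for vertices arising from W_1-side, insert y immediately below x in their orders; for vertices arising from the W_2-side, insert y immediately above x. Then R is intermediate on G. -/

import Mathlib

open SimpleGraph

/-- `Geo G u w v` : vertex `w` lies geodesically between `u` and `v`
(i.e. on some shortest path from `u` to `v`). -/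
def Geo {V : Type*} (G : SimpleGraph V) (u w v : V) : Prop :=
  G.dist u w + G.dist w v = G.dist u v

/-- A set of vertices is geodesically convex if it contains every vertex
lying on a shortest path between two of its members. -/
def GConvex {V : Type*} (G : SimpleGraph V) (C : Set V) : Prop :=
  ∀ u ∈ C, ∀ v ∈ C, ∀ w, Geo G u w v → w ∈ C

/-- A profile of strict preference relations is intermediate on `G` if every
set `V_{ab}` of voters preferring `a` to `b` is geodesically convex. -/
def Intermediate {V A : Type*} (G : SimpleGraph V) (R : V → A → A → Prop) : Prop :=
  ∀ a b : A, GConvex G {i | R i a b}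

/-- A median graph: connected, and every triple of vertices has a unique median. -/
def MedianGraph {V : Type*} (G : SimpleGraph V) : Prop :=
  G.Connected ∧ ∀ u v w : V, ∃! m : V, Geo G u m v ∧ Geo G u m w ∧ Geo G v m w

/-- Vertices of the convex expansion of a graph with vertex set `V'` along
`W₁, W₂`: a vertex `v ∈ W₁` gives `(v, false)`, a vertex `v ∈ W₂` gives
`(v, true)`; vertices of `W₁ ∩ W₂` are thus split into two copies. -/
def ExpVert (V' : Type*) (W₁ W₂ : Set V') : Type _ :=
  {p : V' × Bool // if p.2 then p.1 ∈ W₂ else p.1 ∈ W₁}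

/-- The expansion graph: the two copies of a vertex of `W₁ ∩ W₂` are joined
by an edge, and edges of the original graph are kept within each side. -/
def ExpGraph {V' : Type*} (G' : SimpleGraph V') (W₁ W₂ : Set V') :
    SimpleGraph (ExpVert V' W₁ W₂) where
  Adj q r := (q.1.1 = r.1.1 ∧ q.1.2 ≠ r.1.2) ∨ (q.1.2 = r.1.2 ∧ G'.Adj q.1.1 r.1.1)
  symm := by
    constructor
    rintro q r (⟨h1, h2⟩ | ⟨h1, h2⟩)
    · exact Or.inl ⟨h1.symm, h2.symm⟩
    · exact Or.inr ⟨h1.symm, h2.symm⟩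
  loopless := by
    constructor
    rintro q (⟨_, h⟩ | ⟨_, h⟩)
    · exact h rfl
    · exact G'.loopless.irrefl _ h

section Aux
variable {V' : Type*} {G' : SimpleGraph V'} {W₁ W₂ : Set V'}

lemma expAdj_iff (q r : ExpVert V' W₁ W₂) :
    (ExpGraph G' W₁ W₂).Adj q r ↔
      (q.1.1 = r.1.1 ∧ q.1.2 ≠ r.1.2) ∨ (q.1.2 = r.1.2 ∧ G'.Adj q.1.1 r.1.1) := Iff.rfl

lemma proj_walk {u v : ExpVert V' W₁ W₂} (q : (ExpGraph G' W₁ W₂).Walk u v) :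
    ∃ p : G'.Walk u.1.1 v.1.1,
      p.length + (if u.1.2 = v.1.2 then 0 else 1) ≤ q.length := by
  induction q with
  | nil => exact ⟨Walk.nil, by simp⟩
  | @cons u w v h q ih =>
    obtain ⟨p, hp⟩ := ih
    rw [expAdj_iff] at h
    rcases h with ⟨he, ht⟩ | ⟨ht, ha⟩
    · refine ⟨p.copy he.symm rfl, ?_⟩
      rw [Walk.length_copy, Walk.length_cons]
      cases hu : u.1.2 <;> cases hw : w.1.2 <;> cases hv : v.1.2 <;>
        simp_all <;> omega
    · refine ⟨Walk.cons ha p, ?_⟩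
      rw [Walk.length_cons, Walk.length_cons]
      cases hu : u.1.2 <;> cases hw : w.1.2 <;> cases hv : v.1.2 <;>
        simp_all <;> omega

lemma lift_walk (t : Bool) {a b : V'} (p : G'.Walk a b) :
    ∀ (_ : ∀ w ∈ p.support, (if t then w ∈ W₂ else w ∈ W₁))
      (ha : if t then a ∈ W₂ else a ∈ W₁) (hb : if t then b ∈ W₂ else b ∈ W₁),
    ∃ q : (ExpGraph G' W₁ W₂).Walk ⟨(a, t), ha⟩ ⟨(b, t), hb⟩, q.length = p.length := by
  induction p with
  | nil =>
    intro _ ha hb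
    exact ⟨(Walk.nil).copy rfl (Subtype.ext rfl), rfl⟩
  | @cons a c b h p ih =>
    intro hs ha hb
    have hc : if t then c ∈ W₂ else c ∈ W₁ := hs c (by simp)
    obtain ⟨q, hq⟩ := ih (fun w hw => hs w (by simp [hw])) hc hb
    have hadj : (ExpGraph G' W₁ W₂).Adj ⟨(a, t), ha⟩ ⟨(c, t), hc⟩ := Or.inr ⟨rfl, h⟩
    exact ⟨Walk.cons hadj q, by show q.length + 1 = p.length + 1; rw [hq]⟩

lemma dist_split {V : Type*} {G : SimpleGraph V} {a b : V} (p : G.Walk a b)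
    (hp : p.length = G.dist a b) {w : V} (hw : w ∈ p.support) :
    G.dist a w + G.dist w b = G.dist a b := by
  classical
  have h1 := SimpleGraph.dist_le (p.takeUntil w hw)
  have h2 := SimpleGraph.dist_le (p.dropUntil w hw)
  have h3 : (p.takeUntil w hw).length + (p.dropUntil w hw).length = p.length := by
    rw [← Walk.length_append, p.take_spec hw]
  obtain ⟨q1, hq1⟩ := Reachable.exists_walk_length_eq_dist ⟨p.takeUntil w hw⟩
  obtain ⟨q2, hq2⟩ := Reachable.exists_walk_length_eq_dist ⟨p.dropUntil w hw⟩
  have h4 := SimpleGraph.dist_le (q1.append q2)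
  rw [Walk.length_append, hq1, hq2] at h4
  omega

lemma convex_geo_walk {V : Type*} {G : SimpleGraph V} (hconn : G.Connected)
    {C : Set V} (hC : GConvex G C) {a b : V} (ha : a ∈ C) (hb : b ∈ C) :
    ∃ p : G.Walk a b, p.length = G.dist a b ∧ ∀ w ∈ p.support, w ∈ C := by
  obtain ⟨p, hp⟩ := hconn.exists_walk_length_eq_dist a b
  exact ⟨p, hp, fun w hw => hC a ha b hb w (dist_split p hp hw)⟩

lemma side_convex (hc1 : GConvex G' W₁) (hc2 : GConvex G' W₂) (t : Bool) :
    GConvex G' {w : V' | if t then w ∈ W₂ else w ∈ W₁} := by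
  cases t
  · exact hc1
  · exact hc2

lemma exists_inter (hunion : W₁ ∪ W₂ = Set.univ)
    (hnoedge : ∀ u ∈ W₁ \ W₂, ∀ v ∈ W₂ \ W₁, ¬ G'.Adj u v)
    {a b : V'} (p : G'.Walk a b) : ∀ (_ : a ∈ W₁) (_ : b ∈ W₂),
    ∃ m ∈ p.support, m ∈ W₁ ∩ W₂ := by
  induction p with
  | nil => intro ha hb; exact ⟨_, by simp, ha, hb⟩
  | @cons a c b h p ih =>
    intro ha hb
    by_cases haw : a ∈ W₂
    · exact ⟨a, by simp, ha, haw⟩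
    · have hc : c ∈ W₁ := by
        have hc' : c ∈ W₁ ∪ W₂ := by rw [hunion]; trivial
        rcases hc' with h' | h'
        · exact h'
        · by_contra hcw
          exact hnoedge a ⟨ha, haw⟩ c ⟨h', hcw⟩ h
      obtain ⟨m, hm, hm2⟩ := ih hc hb
      exact ⟨m, by simp [hm], hm2⟩

end Aux

section Aux2
variable {V' : Type*} {G' : SimpleGraph V'} {W₁ W₂ : Set V'}

lemma dist_same (hconn' : G'.Connected) (hc1 : GConvex G' W₁) (hc2 : GConvex G' W₂)
    {t : Bool} {a b : V'} (ha : if t then a ∈ W₂ else a ∈ W₁)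
    (hb : if t then b ∈ W₂ else b ∈ W₁) :
    (ExpGraph G' W₁ W₂).dist ⟨(a, t), ha⟩ ⟨(b, t), hb⟩ = G'.dist a b := by
  obtain ⟨p, hp, hps⟩ := convex_geo_walk hconn' (side_convex hc1 hc2 t)
    (show a ∈ {w : V' | if t then w ∈ W₂ else w ∈ W₁} from ha)
    (show b ∈ {w : V' | if t then w ∈ W₂ else w ∈ W₁} from hb)
  obtain ⟨q0, hq0⟩ := lift_walk (G' := G') t p hps ha hb
  have hle : (ExpGraph G' W₁ W₂).dist ⟨(a, t), ha⟩ ⟨(b, t), hb⟩ ≤ G'.dist a b := by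
    have := SimpleGraph.dist_le q0
    omega
  have hge : G'.dist a b ≤ (ExpGraph G' W₁ W₂).dist ⟨(a, t), ha⟩ ⟨(b, t), hb⟩ := by
    obtain ⟨q, hq⟩ := Reachable.exists_walk_length_eq_dist ⟨q0⟩
    obtain ⟨p', hp'⟩ := proj_walk q
    have h6 : p'.length ≤ q.length := by simpa using hp'
    have h5 : G'.dist a b ≤ p'.length := SimpleGraph.dist_le p'
    omega
  omega

lemma dist_diff (hconn' : G'.Connected) (hc1 : GConvex G' W₁) (hc2 : GConvex G' W₂)
    (hunion : W₁ ∪ W₂ = Set.univ)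
    (hnoedge : ∀ u ∈ W₁ \ W₂, ∀ v ∈ W₂ \ W₁, ¬ G'.Adj u v)
    {a b : V'} (ha : a ∈ W₁) (hb : b ∈ W₂) :
    (ExpGraph G' W₁ W₂).dist ⟨(a, false), ha⟩ ⟨(b, true), hb⟩ = G'.dist a b + 1 := by
  obtain ⟨p, hp⟩ := hconn'.exists_walk_length_eq_dist a b
  obtain ⟨m, hms, hm1, hm2⟩ := exists_inter hunion hnoedge p ha hb
  have hsplit := dist_split p hp hms
  obtain ⟨p1, hp1, hp1s⟩ := convex_geo_walk hconn' hc1 ha hm1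
  obtain ⟨p2, hp2, hp2s⟩ := convex_geo_walk hconn' hc2 hm2 hb
  obtain ⟨q1, hq1⟩ := lift_walk (G' := G') false p1 hp1s ha hm1
  obtain ⟨q2, hq2⟩ := lift_walk (G' := G') true p2 hp2s hm2 hb
  have hadj : (ExpGraph G' W₁ W₂).Adj ⟨(m, false), hm1⟩ ⟨(m, true), hm2⟩ :=
    Or.inl ⟨rfl, by simp⟩
  set q : (ExpGraph G' W₁ W₂).Walk ⟨(a, false), ha⟩ ⟨(b, true), hb⟩ :=
    q1.append (Walk.cons hadj q2) with hqdef
  have hqlen : q.length = G'.dist a b + 1 := by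
    rw [hqdef]
    have h1 := Walk.length_append q1 (Walk.cons hadj q2)
    have h2 := Walk.length_cons hadj q2
    omega
  have hle := SimpleGraph.dist_le q
  have hge : G'.dist a b + 1 ≤ (ExpGraph G' W₁ W₂).dist ⟨(a, false), ha⟩ ⟨(b, true), hb⟩ := by
    obtain ⟨q', hq'⟩ := Reachable.exists_walk_length_eq_dist ⟨q⟩
    obtain ⟨p', hp'⟩ := proj_walk q'
    have h6 : p'.length + 1 ≤ q'.length := by simpa using hp'
    have h5 : G'.dist a b ≤ p'.length := SimpleGraph.dist_le p'
    omega
  omega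

lemma dist_formula (hconn' : G'.Connected) (hc1 : GConvex G' W₁) (hc2 : GConvex G' W₂)
    (hunion : W₁ ∪ W₂ = Set.univ)
    (hnoedge : ∀ u ∈ W₁ \ W₂, ∀ v ∈ W₂ \ W₁, ¬ G'.Adj u v)
    (u v : ExpVert V' W₁ W₂) :
    (ExpGraph G' W₁ W₂).dist u v =
      G'.dist u.1.1 v.1.1 + (if u.1.2 = v.1.2 then 0 else 1) := by
  obtain ⟨⟨a, ta⟩, hu⟩ := u
  obtain ⟨⟨b, tb⟩, hv⟩ := v
  cases ta <;> cases tb <;> simp only []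
  · simpa using dist_same hconn' hc1 hc2 hu hv
  · simpa using dist_diff hconn' hc1 hc2 hunion hnoedge hu hv
  · have := dist_diff hconn' hc1 hc2 hunion hnoedge hv hu
    rw [SimpleGraph.dist_comm] at this
    simpa using (SimpleGraph.dist_comm (G := ExpGraph G' W₁ W₂)).trans this
  · simpa using dist_same hconn' hc1 hc2 hu hv

lemma key (hconn' : G'.Connected) (hc1 : GConvex G' W₁) (hc2 : GConvex G' W₂)
    (hunion : W₁ ∪ W₂ = Set.univ)
    (hnoedge : ∀ u ∈ W₁ \ W₂, ∀ v ∈ W₂ \ W₁, ¬ G'.Adj u v)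
    {u w v : ExpVert V' W₁ W₂}
    (hgeo : Geo (ExpGraph G' W₁ W₂) u w v) :
    Geo G' u.1.1 w.1.1 v.1.1 ∧ (u.1.2 = v.1.2 → w.1.2 = u.1.2) := by
  have e1 := dist_formula hconn' hc1 hc2 hunion hnoedge u w
  have e2 := dist_formula hconn' hc1 hc2 hunion hnoedge w v
  have e3 := dist_formula hconn' hc1 hc2 hunion hnoedge u v
  have tri := hconn'.dist_triangle (u := u.1.1) (v := w.1.1) (w := v.1.1)
  unfold Geo at hgeo ⊢
  rw [e1, e2, e3] at hgeo
  constructor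
  · cases hu : u.1.2 <;> cases hw : w.1.2 <;> cases hv : v.1.2 <;> simp_all <;> omega
  · intro h
    cases hu : u.1.2 <;> cases hw : w.1.2 <;> cases hv : v.1.2 <;> simp_all <;> omega

end Aux2

/-- The expanded profile over `Option X` (`none` is the clone `y` of `x`):
on the `W₁`-side (`tag = false`), `y` is inserted immediately below `x`;
on the `W₂`-side (`tag = true`), `y` is inserted immediately above `x`. -/
def ExpProfile {V' X : Type*} {W₁ W₂ : Set V'} (R' : V' → X → X → Prop) (x : X) :
    ExpVert V' W₁ W₂ → Option X → Option X → Prop :=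
  fun p o₁ o₂ =>
    match o₁, o₂ with
    | some a, some b => R' p.1.1 a b
    | none, some b => if p.1.2 then (b = x ∨ R' p.1.1 x b) else R' p.1.1 x b
    | some a, none => if p.1.2 then R' p.1.1 a x else (a = x ∨ R' p.1.1 a x)
    | none, none => False

section Aux3
variable {V' X : Type*} {W₁ W₂ : Set V'} {R' : V' → X → X → Prop} {x : X}

lemma mem_ss {p : ExpVert V' W₁ W₂} {a b : X} :
    ExpProfile (W₁ := W₁) (W₂ := W₂) R' x p (some a) (some b) ↔ R' p.1.1 a b := Iff.rfl

lemma mem_ns {p : ExpVert V' W₁ W₂} {b : X} :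
    ExpProfile (W₁ := W₁) (W₂ := W₂) R' x p none (some b) ↔
      (if p.1.2 then (b = x ∨ R' p.1.1 x b) else R' p.1.1 x b) := Iff.rfl

lemma mem_sn {p : ExpVert V' W₁ W₂} {a : X} :
    ExpProfile (W₁ := W₁) (W₂ := W₂) R' x p (some a) none ↔
      (if p.1.2 then R' p.1.1 a x else (a = x ∨ R' p.1.1 a x)) := Iff.rfl

lemma mem_nn {p : ExpVert V' W₁ W₂} :
    ExpProfile (W₁ := W₁) (W₂ := W₂) R' x p none none ↔ False := Iff.rfl

end Aux3

/-- The cloning construction along a convex expansion preserves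
intermediateness: if `R'` is intermediate on the median graph `G'`, then the
expanded profile is intermediate on the convex expansion of `G'`. -/
theorem stmt15 {V' X : Type*} (G' : SimpleGraph V') (hG' : MedianGraph G')
    (W₁ W₂ : Set V') (hc1 : GConvex G' W₁) (hc2 : GConvex G' W₂)
    (hunion : W₁ ∪ W₂ = Set.univ) (hinter : (W₁ ∩ W₂).Nonempty)
    (hnoedge : ∀ u ∈ W₁ \ W₂, ∀ v ∈ W₂ \ W₁, ¬ G'.Adj u v)
    (R' : V' → X → X → Prop) (hR' : ∀ v, IsStrictTotalOrder X (R' v))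
    (hint' : Intermediate G' R') (x : X) :
    Intermediate (ExpGraph G' W₁ W₂) (ExpProfile (W₁ := W₁) (W₂ := W₂) R' x) := by
  have hconn' := hG'.1
  have hirr : ∀ v : V', ¬ R' v x x := fun v h => by
    haveI := hR' v
    exact irrefl_of (R' v) x h
  intro a b
  match a, b with
  | none, none =>
    intro u hu
    exact absurd hu (by rw [Set.mem_setOf_eq, mem_nn]; exact not_false)
  | some a, some b =>
    intro u hu v hv w hgeo
    have := key hconn' hc1 hc2 hunion hnoedge hgeo
    exact hint' a b u.1.1 hu v.1.1 hv w.1.1 this.1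
  | none, some b =>
    by_cases hbx : b = x
    · subst hbx
      intro u hu v hv w hgeo
      rw [Set.mem_setOf_eq, mem_ns] at hu hv ⊢
      have hu' : u.1.2 = true := by
        by_contra h
        rw [Bool.not_eq_true] at h
        rw [if_neg (by simp [h])] at hu
        exact hirr _ hu
      have hv' : v.1.2 = true := by
        by_contra h
        rw [Bool.not_eq_true] at h
        rw [if_neg (by simp [h])] at hv
        exact hirr _ hv
      have hw' : w.1.2 = true := by
        have := (key hconn' hc1 hc2 hunion hnoedge hgeo).2 (by rw [hu', hv'])
        rw [this, hu']
      rw [if_pos (by simp [hw'])]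
      exact Or.inl rfl
    · intro u hu v hv w hgeo
      rw [Set.mem_setOf_eq, mem_ns] at hu hv ⊢
      have hR : ∀ p : ExpVert V' W₁ W₂,
          (if p.1.2 then (b = x ∨ R' p.1.1 x b) else R' p.1.1 x b) ↔ R' p.1.1 x b := by
        intro p
        cases hp : p.1.2 <;> simp [hp, hbx]
      rw [hR] at hu hv ⊢
      exact hint' x b u.1.1 hu v.1.1 hv w.1.1
        (key hconn' hc1 hc2 hunion hnoedge hgeo).1
  | some a, none =>
    by_cases hax : a = x
    · subst hax
      intro u hu v hv w hgeo
      rw [Set.mem_setOf_eq, mem_sn] at hu hv ⊢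
      have hu' : u.1.2 = false := by
        by_contra h
        rw [Bool.not_eq_false] at h
        rw [if_pos (by simp [h])] at hu
        exact hirr _ hu
      have hv' : v.1.2 = false := by
        by_contra h
        rw [Bool.not_eq_false] at h
        rw [if_pos (by simp [h])] at hv
        exact hirr _ hv
      have hw' : w.1.2 = false := by
        have := (key hconn' hc1 hc2 hunion hnoedge hgeo).2 (by rw [hu', hv'])
        rw [this, hu']
      rw [if_neg (by simp [hw'])]
      exact Or.inl rfl
    · intro u hu v hv w hgeo
      rw [Set.mem_setOf_eq, mem_sn] at hu hv ⊢
      have hR : ∀ p : ExpVert V' W₁ W₂,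
          (if p.1.2 then R' p.1.1 a x else (a = x ∨ R' p.1.1 a x)) ↔ R' p.1.1 a x := by
        intro p
        cases hp : p.1.2 <;> simp [hp, hax]
      rw [hR] at hu hv ⊢
      exact hint' a x u.1.1 hu v.1.1 hv w.1.1
        (key hconn' hc1 hc2 hunion hnoedge hgeo).1
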